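/- Let d ≥ 1, let ε > 0, and let Λ : (−ε, ε) → GL(d, ℝ) be a differentiable family of invertible real d×d matrices. Then the following are equivalent: (i) for all τ₁ < τ₂ in (−ε, ε), the matrix Λ(τ₁)·Λ(τ₂)⁻¹ is a contraction, i.e. its operator norm as a linear map of Euclidean space ℝ^d is at most 1; (ii) for every τ ∈ (−ε, ε), the derivative at τ of the curve of Gram matrices ω(τ) = Λ(τ)ᵀ·Λ(τ) is a positive semidefinite matrix. -/

import Mathlib

open scoped Matrix

/-- The operator norm of a real `d × d` matrix viewed as a linear map of
Euclidean space `ℝ^d` (with the Euclidean norm). -/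
noncomputable def matrixOpNorm {d : ℕ} (A : Matrix (Fin d) (Fin d) ℝ) : ℝ :=
  ‖LinearMap.toContinuousLinearMap (Matrix.toEuclideanLin A)‖

section Aux

variable {d : ℕ}

lemma quad_eq_sum_sq (A : Matrix (Fin d) (Fin d) ℝ) (x : Fin d → ℝ) :
    x ⬝ᵥ ((Aᵀ * A) *ᵥ x) = ∑ i, (A *ᵥ x) i ^ 2 := by
  rw [← Matrix.mulVec_mulVec, Matrix.dotProduct_mulVec, Matrix.vecMul_transpose]
  simp [dotProduct, sq]

lemma euclid_norm_sq (y : Fin d → ℝ) :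
    ‖(WithLp.equiv 2 (Fin d → ℝ)).symm y‖ ^ 2 = ∑ i, y i ^ 2 := by
  rw [EuclideanSpace.norm_eq, Real.sq_sqrt (by positivity)]
  simp [sq_abs]

lemma matrixOpNorm_le_one_iff (A : Matrix (Fin d) (Fin d) ℝ) :
    matrixOpNorm A ≤ 1 ↔ ∀ x : Fin d → ℝ, ∑ i, (A *ᵥ x) i ^ 2 ≤ ∑ i, x i ^ 2 := by
  set T := LinearMap.toContinuousLinearMap (Matrix.toEuclideanLin A) with hT
  have hTx : ∀ x : Fin d → ℝ,
      T ((WithLp.equiv 2 (Fin d → ℝ)).symm x) = (WithLp.equiv 2 (Fin d → ℝ)).symm (A *ᵥ x) := by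
    intro x
    simp [hT, Matrix.toEuclideanLin_apply]
  constructor
  · intro h x
    have h1 := T.le_opNorm ((WithLp.equiv 2 (Fin d → ℝ)).symm x)
    have h2 : ‖T ((WithLp.equiv 2 (Fin d → ℝ)).symm x)‖ ≤
        ‖(WithLp.equiv 2 (Fin d → ℝ)).symm x‖ := by
      calc _ ≤ ‖T‖ * ‖(WithLp.equiv 2 (Fin d → ℝ)).symm x‖ := h1
        _ ≤ 1 * _ := by gcongr; exact h
        _ = _ := one_mul _
    have := pow_le_pow_left₀ (norm_nonneg _) h2 2
    rwa [hTx, euclid_norm_sq, euclid_norm_sq] at this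
  · intro h
    refine T.opNorm_le_bound zero_le_one fun x => ?_
    rw [one_mul]
    have hx : x = (WithLp.equiv 2 (Fin d → ℝ)).symm (WithLp.equiv 2 (Fin d → ℝ) x) := rfl
    rw [hx, hTx]
    have h2 := h (WithLp.equiv 2 (Fin d → ℝ) x)
    rw [← euclid_norm_sq, ← euclid_norm_sq] at h2
    calc ‖_‖ = √(‖(WithLp.equiv 2 (Fin d → ℝ)).symm
            (A *ᵥ WithLp.equiv 2 (Fin d → ℝ) x)‖ ^ 2) :=
          (Real.sqrt_sq (norm_nonneg _)).symm
      _ ≤ √(‖(WithLp.equiv 2 (Fin d → ℝ)).symm (WithLp.equiv 2 (Fin d → ℝ) x)‖ ^ 2) :=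
          Real.sqrt_le_sqrt h2
      _ = _ := Real.sqrt_sq (norm_nonneg _)

variable {ε : ℝ} {Λ Λ' : ℝ → Matrix (Fin d) (Fin d) ℝ}

lemma gram_hasDerivAt
    (hderiv : ∀ τ ∈ Set.Ioo (-ε) ε, ∀ i j, HasDerivAt (fun t => Λ t i j) (Λ' τ i j) τ)
    {τ : ℝ} (hτ : τ ∈ Set.Ioo (-ε) ε) (i j : Fin d) :
    HasDerivAt (fun t => ((Λ t)ᵀ * Λ t) i j)
      (((Λ' τ)ᵀ * Λ τ + (Λ τ)ᵀ * Λ' τ) i j) τ := by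
  have h : HasDerivAt (fun t => ∑ k, Λ t k i * Λ t k j)
      (∑ k, (Λ' τ k i * Λ τ k j + Λ τ k i * Λ' τ k j)) τ :=
    HasDerivAt.fun_sum fun k _ => (hderiv τ hτ k i).mul (hderiv τ hτ k j)
  have heq : (((Λ' τ)ᵀ * Λ τ + (Λ τ)ᵀ * Λ' τ) i j)
      = ∑ k, (Λ' τ k i * Λ τ k j + Λ τ k i * Λ' τ k j) := by
    simp [Matrix.add_apply, Matrix.mul_apply, Matrix.transpose_apply, Finset.sum_add_distrib]
  rw [heq]
  simpa only [Matrix.mul_apply, Matrix.transpose_apply] using h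

lemma quad_hasDerivAt
    (hderiv : ∀ τ ∈ Set.Ioo (-ε) ε, ∀ i j, HasDerivAt (fun t => Λ t i j) (Λ' τ i j) τ)
    {τ : ℝ} (hτ : τ ∈ Set.Ioo (-ε) ε) (v : Fin d → ℝ) :
    HasDerivAt (fun t => v ⬝ᵥ (((Λ t)ᵀ * Λ t) *ᵥ v))
      (v ⬝ᵥ ((((Λ' τ)ᵀ * Λ τ + (Λ τ)ᵀ * Λ' τ)) *ᵥ v)) τ := by
  have h : HasDerivAt (fun t => ∑ i, v i * ∑ j, ((Λ t)ᵀ * Λ t) i j * v j)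
      (∑ i, v i * ∑ j, ((Λ' τ)ᵀ * Λ τ + (Λ τ)ᵀ * Λ' τ) i j * v j) τ :=
    HasDerivAt.fun_sum fun i _ => HasDerivAt.const_mul (v i)
      (HasDerivAt.fun_sum fun j _ => (gram_hasDerivAt hderiv hτ i j).mul_const (v j))
  have heq : ∀ (M : Matrix (Fin d) (Fin d) ℝ),
      v ⬝ᵥ (M *ᵥ v) = ∑ i, v i * ∑ j, M i j * v j := by
    intro M; simp [dotProduct, Matrix.mulVec]
  rw [heq]
  simpa only [heq] using h

end Aux

/-- For a differentiable family `Λ : (-ε, ε) → GL(d, ℝ)` of invertible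
matrices, the comparison operators `Λ(τ₁)·Λ(τ₂)⁻¹` (for `τ₁ < τ₂`) are all contractions
iff the entrywise derivative of the Gram curve `ω(τ) = Λ(τ)ᵀ·Λ(τ)` is positive
semidefinite at every `τ`. -/
theorem stmt_0 (d : ℕ) (hd : 1 ≤ d) (ε : ℝ) (hε : 0 < ε)
    (Λ Λ' : ℝ → Matrix (Fin d) (Fin d) ℝ)
    (hinv : ∀ τ ∈ Set.Ioo (-ε) ε, IsUnit (Λ τ).det)
    (hderiv : ∀ τ ∈ Set.Ioo (-ε) ε, ∀ i j,
      HasDerivAt (fun t => Λ t i j) (Λ' τ i j) τ) :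
    (∀ τ₁ ∈ Set.Ioo (-ε) ε, ∀ τ₂ ∈ Set.Ioo (-ε) ε, τ₁ < τ₂ →
        matrixOpNorm (Λ τ₁ * (Λ τ₂)⁻¹) ≤ 1) ↔
      (∀ τ ∈ Set.Ioo (-ε) ε,
        Matrix.PosSemidef
          (Matrix.of fun i j => deriv (fun t => ((Λ t)ᵀ * Λ t) i j) τ)) := by
  set Ω : ℝ → Matrix (Fin d) (Fin d) ℝ := fun τ => (Λ' τ)ᵀ * Λ τ + (Λ τ)ᵀ * Λ' τ with hΩ
  have hMeq : ∀ τ ∈ Set.Ioo (-ε) ε,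
      (Matrix.of fun i j => deriv (fun t => ((Λ t)ᵀ * Λ t) i j) τ) = Ω τ := by
    intro τ hτ
    ext i j
    show deriv (fun t => ((Λ t)ᵀ * Λ t) i j) τ = _
    exact (gram_hasDerivAt hderiv hτ i j).deriv
  have hstar : ∀ x : Fin d → ℝ, star x = x := fun x => funext fun i => star_trivial _
  -- contraction is equivalent to comparison of quadratic forms
  have hcontr : ∀ τ₁ ∈ Set.Ioo (-ε) ε, ∀ τ₂ ∈ Set.Ioo (-ε) ε,
      (matrixOpNorm (Λ τ₁ * (Λ τ₂)⁻¹) ≤ 1 ↔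
        ∀ v : Fin d → ℝ, v ⬝ᵥ (((Λ τ₁)ᵀ * Λ τ₁) *ᵥ v) ≤ v ⬝ᵥ (((Λ τ₂)ᵀ * Λ τ₂) *ᵥ v)) := by
    intro τ₁ h₁ τ₂ h₂
    rw [matrixOpNorm_le_one_iff]
    have hbij : ∀ v : Fin d → ℝ, (Λ τ₁ * (Λ τ₂)⁻¹) *ᵥ (Λ τ₂ *ᵥ v) = Λ τ₁ *ᵥ v := by
      intro v
      rw [Matrix.mulVec_mulVec, mul_assoc, Matrix.nonsing_inv_mul _ (hinv τ₂ h₂), mul_one]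
    constructor
    · intro h v
      have := h (Λ τ₂ *ᵥ v)
      rw [hbij] at this
      rw [quad_eq_sum_sq, quad_eq_sum_sq]
      simpa [sq] using this
    · intro h x
      have hv : Λ τ₂ *ᵥ ((Λ τ₂)⁻¹ *ᵥ x) = x := by
        rw [Matrix.mulVec_mulVec, Matrix.mul_nonsing_inv _ (hinv τ₂ h₂), Matrix.one_mulVec]
      have hx : (Λ τ₁ * (Λ τ₂)⁻¹) *ᵥ x = Λ τ₁ *ᵥ ((Λ τ₂)⁻¹ *ᵥ x) := by
        rw [Matrix.mulVec_mulVec]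
      have := h ((Λ τ₂)⁻¹ *ᵥ x)
      rw [quad_eq_sum_sq, quad_eq_sum_sq, hv] at this
      rw [hx]
      simpa [sq] using this
  constructor
  · -- contractions ⇒ positive semidefinite derivative
    intro hi τ hτ
    rw [hMeq τ hτ]
    refine Matrix.PosSemidef.of_dotProduct_mulVec_nonneg ?_ ?_
    · -- Hermitian
      show (Ω τ)ᴴ = Ω τ
      ext i j
      simp only [Matrix.conjTranspose_apply, star_trivial, hΩ, Matrix.add_apply,
        Matrix.mul_apply, Matrix.transpose_apply]
      rw [add_comm]
      congr 1 <;> exact Finset.sum_congr rfl fun k _ => mul_comm _ _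
    · intro x
      rw [hstar x]
      have hL := quad_hasDerivAt hderiv hτ x
      have hslope := hasDerivAt_iff_tendsto_slope.mp hL
      refine ge_of_tendsto hslope ?_
      have hmem : Set.Ioo (-ε) ε ∈ nhdsWithin τ {τ}ᶜ :=
        nhdsWithin_le_nhds (isOpen_Ioo.mem_nhds hτ)
      filter_upwards [hmem, self_mem_nhdsWithin] with t ht htne
      rw [slope_def_field]
      rcases lt_or_gt_of_ne (htne : t ≠ τ) with hlt | hgt
      · refine div_nonneg_iff.mpr (Or.inr ⟨?_, ?_⟩)
        · have hc := (hcontr t ht τ hτ).mp (hi t ht τ hτ hlt) x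
          linarith
        · linarith
      · refine div_nonneg ?_ ?_
        · have hc := (hcontr τ hτ t ht).mp (hi τ hτ t ht hgt) x
          linarith
        · linarith
  · -- positive semidefinite derivative ⇒ contractions
    intro hii τ₁ h₁ τ₂ h₂ hlt
    rw [hcontr τ₁ h₁ τ₂ h₂]
    intro v
    have key : ∀ t ∈ Set.Ioo (-ε) ε, 0 ≤ v ⬝ᵥ (Ω t *ᵥ v) := by
      intro t ht
      have h2 := (hii t ht).dotProduct_mulVec_nonneg v
      rw [hMeq t ht, hstar v] at h2
      exact h2
    have hmono : MonotoneOn (fun t => v ⬝ᵥ (((Λ t)ᵀ * Λ t) *ᵥ v)) (Set.Ioo (-ε) ε) := by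
      apply monotoneOn_of_deriv_nonneg (convex_Ioo _ _)
      · intro t ht
        exact (quad_hasDerivAt hderiv ht v).continuousAt.continuousWithinAt
      · rw [interior_Ioo]
        intro t ht
        exact (quad_hasDerivAt hderiv ht v).differentiableAt.differentiableWithinAt
      · rw [interior_Ioo]
        intro t ht
        rw [(quad_hasDerivAt hderiv ht v).deriv]
        exact key t ht
    exact hmono h₁ h₂ hlt.le
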